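/- arXiv:1904.02789 — 3 statements merged into one kernel-verified Lean document; each statement's English description precedes it below -/
import Mathlib

section
/- Suppose the Apollonius circle {z : ‖z − x_E‖ = α‖z − x_P‖} intersects the x-axis in exactly the two points (c₁, 0) and (c₂, 0) with c₁ < c₂. Then the function G₁(x_p) = ‖(x_p,0) − x_P‖ − ‖(x_p,0) − x_E‖/α satisfies: G₁(c₁) = G₁(c₂) = 0, G₁(x_p) > 0 for x_p ∈ (c₁, c₂), and G₁(x_p) < 0 for x_p ∈ (−∞, c₁) ∪ (c₂, +∞). -/
noncomputable abbrev E2 := EuclideanSpace ℝ (Fin 2)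

noncomputable def pt (x y : ℝ) : E2 := WithLp.toLp 2 ![x, y]

lemma pt_normsq (x : ℝ) (w : E2) : ‖pt x 0 - w‖^2 = (x - w 0)^2 + (w 1)^2 := by
  rw [EuclideanSpace.norm_eq, Real.sq_sqrt (by positivity)]
  simp [pt, Fin.sum_univ_two]

theorem sign_of_G1
    (α : ℝ) (hα0 : 0 < α) (hα1 : α < 1)
    (xP xE : E2) (hyE : xE 1 < 0)
    (c₁ c₂ : ℝ) (hc : c₁ < c₂)
    (hcirc : {z : E2 | ‖z - xE‖ = α * ‖z - xP‖} ∩ {z : E2 | z 1 = 0}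
      = {pt c₁ 0, pt c₂ 0})
    (G₁ : ℝ → ℝ)
    (hG : ∀ x, G₁ x = ‖pt x 0 - xP‖ - ‖pt x 0 - xE‖ / α) :
    G₁ c₁ = 0 ∧ G₁ c₂ = 0 ∧
      (∀ x, c₁ < x → x < c₂ → 0 < G₁ x) ∧
      (∀ x, x < c₁ ∨ c₂ < x → G₁ x < 0) := by
  -- membership of pt c₁ 0 and pt c₂ 0 in the circle
  have hmem : ∀ c : ℝ, pt c 0 ∈ ({pt c₁ 0, pt c₂ 0} : Set E2) →
      ‖pt c 0 - xE‖ = α * ‖pt c 0 - xP‖ := by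
    intro c h
    rw [← hcirc] at h
    exact h.1
  have h1 : ‖pt c₁ 0 - xE‖ = α * ‖pt c₁ 0 - xP‖ := hmem c₁ (by left; rfl)
  have h2 : ‖pt c₂ 0 - xE‖ = α * ‖pt c₂ 0 - xP‖ := hmem c₂ (by right; rfl)
  -- quadratic identity
  have hq1 : (c₁ - xE 0)^2 + (xE 1)^2 - α^2 * ((c₁ - xP 0)^2 + (xP 1)^2) = 0 := by
    rw [← pt_normsq, ← pt_normsq, h1]; ring
  have hq2 : (c₂ - xE 0)^2 + (xE 1)^2 - α^2 * ((c₂ - xP 0)^2 + (xP 1)^2) = 0 := by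
    rw [← pt_normsq, ← pt_normsq, h2]; ring
  have hne : c₂ - c₁ ≠ 0 := sub_ne_zero.2 hc.ne'
  have hfac : ∀ x : ℝ, (x - xE 0)^2 + (xE 1)^2 - α^2 * ((x - xP 0)^2 + (xP 1)^2)
      = (1 - α^2) * (x - c₁) * (x - c₂) := by
    intro x
    have key : (c₂ - c₁) * ((x - xE 0)^2 + (xE 1)^2 - α^2 * ((x - xP 0)^2 + (xP 1)^2)
        - (1 - α^2) * (x - c₁) * (x - c₂)) = 0 := by
      linear_combination (c₂ - x) * hq1 + (x - c₁) * hq2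
    have := (mul_eq_zero.1 key).resolve_left hne
    linarith
  have hqx : ∀ x : ℝ, ‖pt x 0 - xE‖^2 - α^2 * ‖pt x 0 - xP‖^2
      = (1 - α^2) * (x - c₁) * (x - c₂) := by
    intro x; rw [pt_normsq, pt_normsq]; exact hfac x
  have hα2 : 0 < 1 - α^2 := by nlinarith
  refine ⟨?_, ?_, ?_, ?_⟩
  · rw [hG]; field_simp; linarith [h1]
  · rw [hG]; field_simp; linarith [h2]
  · intro x hx1 hx2
    have hq : ‖pt x 0 - xE‖^2 - α^2 * ‖pt x 0 - xP‖^2 < 0 := by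
      rw [hqx]
      exact mul_neg_of_pos_of_neg (mul_pos hα2 (by linarith)) (by linarith)
    have hsq : ‖pt x 0 - xE‖^2 < (α * ‖pt x 0 - xP‖)^2 := by nlinarith
    have hlt : ‖pt x 0 - xE‖ < α * ‖pt x 0 - xP‖ :=
      lt_of_pow_lt_pow_left₀ 2 (mul_nonneg hα0.le (norm_nonneg _)) hsq
    rw [hG, sub_pos, div_lt_iff₀ hα0]
    linarith
  · intro x hx
    have hq : 0 < ‖pt x 0 - xE‖^2 - α^2 * ‖pt x 0 - xP‖^2 := by
      rw [hqx]
      rcases hx with h | h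
      · exact mul_pos_of_neg_of_neg (mul_neg_of_pos_of_neg hα2 (by linarith)) (by linarith)
      · exact mul_pos (mul_pos hα2 (by linarith)) (by linarith)
    have hsq : (α * ‖pt x 0 - xP‖)^2 < ‖pt x 0 - xE‖^2 := by nlinarith
    have hlt : α * ‖pt x 0 - xP‖ < ‖pt x 0 - xE‖ :=
      lt_of_pow_lt_pow_left₀ 2 (norm_nonneg _) hsq
    rw [hG, sub_neg, lt_div_iff₀ hα0]
    linarith
end

section
/- Let 0 < α < 1, and let x_P = (x₁, y₁), x_E = (x₂, y₂) with y₂ < 0 and x₁ ≤ x₂. If x* ∈ ℝ satisfies both (x* − x₁)/‖(x*,0) − x_P‖ = (x* − x₂)/(α‖(x*,0) − x_E‖) and ‖(x*,0) − x_P‖ ≥ ‖(x*,0) − x_E‖/α, then x* ≥ x₂. Moreover, if x₁ < x₂ then x* > x₂, and if x₁ = x₂ then x* = x₂. -/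
theorem stationary_point_location
    (α : ℝ) (hα0 : 0 < α) (hα1 : α < 1)
    (x₁ y₁ x₂ y₂ : ℝ) (hy₂ : y₂ < 0) (hx : x₁ ≤ x₂)
    (xstar : ℝ)
    (hP : pt xstar 0 ≠ pt x₁ y₁) (hE : pt xstar 0 ≠ pt x₂ y₂)
    (hstat : (xstar - x₁) / ‖pt xstar 0 - pt x₁ y₁‖
      = (xstar - x₂) / (α * ‖pt xstar 0 - pt x₂ y₂‖))
    (hineq : ‖pt xstar 0 - pt x₁ y₁‖ ≥ ‖pt xstar 0 - pt x₂ y₂‖ / α) :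
    x₂ ≤ xstar ∧ (x₁ < x₂ → x₂ < xstar) ∧ (x₁ = x₂ → xstar = x₂) := by
  set dP := ‖pt xstar 0 - pt x₁ y₁‖ with hdP
  set dE := ‖pt xstar 0 - pt x₂ y₂‖ with hdE
  have hPpos : 0 < dP := norm_sub_pos_iff.mpr hP
  have hEpos : 0 < dE := norm_sub_pos_iff.mpr hE
  have hαE : 0 < α * dE := mul_pos hα0 hEpos
  have key : (xstar - x₁) * (α * dE) = (xstar - x₂) * dP := by
    rw [div_eq_div_iff (ne_of_gt hPpos) (ne_of_gt hαE)] at hstat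
    linarith
  have hineq' : dE ≤ α * dP := by
    rw [ge_iff_le, div_le_iff₀ hα0] at hineq
    linarith
  have h1 : x₂ ≤ xstar := by
    by_contra h
    push_neg at h
    have hA : (xstar - x₂) * (α * dE) ≤ (xstar - x₁) * (α * dE) :=
      mul_le_mul_of_nonneg_right (by linarith) (le_of_lt hαE)
    have hB : α * dE < dP := by nlinarith
    nlinarith [mul_lt_mul_of_pos_left hB (show (0:ℝ) < x₂ - xstar by linarith)]
  refine ⟨h1, ?_, ?_⟩
  · intro hlt
    rcases lt_or_eq_of_le h1 with h | h
    · exact h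
    · exfalso
      rw [← h] at key
      nlinarith
  · intro heq
    by_contra hne
    have h2 : x₂ < xstar := lt_of_le_of_ne h1 (fun h => hne h.symm)
    rw [heq] at key
    have hcancel : α * dE = dP :=
      mul_left_cancel₀ (show xstar - x₂ ≠ 0 by linarith) key
    nlinarith
end

section
/- Suppose a point p* = (x*, 0) satisfies simultaneously the stationarity condition α²(x* − x_P¹) = x* − x_E¹ and the zero-payoff condition ‖p* − x_E‖ = α‖p* − x_P‖. Then the initial positions satisfy (x_E¹ − x_P¹)² + (1 − 1/α²)(y_E)² + (1 − α²)(y_P)² = 0, where x_P = (x_P¹, y_P) and x_E = (x_E¹, y_E). -/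
lemma pt_norm_sq (a b c d : ℝ) :
    ‖pt a b - pt c d‖ ^ 2 = (a - c) ^ 2 + (b - d) ^ 2 := by
  rw [EuclideanSpace.norm_eq, Real.sq_sqrt (by positivity)]
  simp [pt, Fin.sum_univ_two, sq_abs]

theorem barrier_relation_of_initial_positions
    (α : ℝ) (hα0 : 0 < α) (hα1 : α < 1)
    (xP1 yP xE1 yE xstar : ℝ)
    (hstat : α ^ 2 * (xstar - xP1) = xstar - xE1)
    (hzero : ‖pt xstar 0 - pt xE1 yE‖ = α * ‖pt xstar 0 - pt xP1 yP‖) :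
    (xE1 - xP1) ^ 2 + (1 - 1 / α ^ 2) * yE ^ 2 + (1 - α ^ 2) * yP ^ 2 = 0 := by
  have h2 : ‖pt xstar 0 - pt xE1 yE‖ ^ 2 = α ^ 2 * ‖pt xstar 0 - pt xP1 yP‖ ^ 2 := by
    rw [hzero]; ring
  rw [pt_norm_sq, pt_norm_sq] at h2
  have hα : α ^ 2 ≠ 0 := by positivity
  field_simp
  nlinarith [h2, hstat, sq_nonneg α]
end
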